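/- Let A, C ∈ ℝ^{n×n}, B, D ∈ ℝ^{n×m}, L ∈ ℝ^{m×n}, let γ ≥ 0, and suppose P ∈ ℝ^{n×n} is symmetric positive definite and satisfies P = γ(A+BL)ᵀP(A+BL) + γ(C+DL)ᵀP(C+DL) + U for some symmetric positive definite matrix U ∈ ℝ^{n×n}. Then γ · ρ(M_L) < 1, where M_L = (A+BL)⊗(A+BL) + (C+DL)⊗(C+DL). -/

import Mathlib

open Matrix Kronecker

/-- The spectral radius of a real square matrix: the maximum modulus of its
complex eigenvalues. -/
noncomputable def specRad {ι : Type*} [Fintype ι] [DecidableEq ι]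
    (M : Matrix ι ι ℝ) : ℝ :=
  sSup ((fun μ : ℂ => ‖μ‖) '' spectrum ℂ (M.map Complex.ofReal))

namespace StabAux

open Complex
open scoped ComplexOrder

variable {k : ℕ}

/-- complexification commutes with multiplication -/
lemma cmul {a b c : ℕ} (X : Matrix (Fin a) (Fin b) ℝ) (Y : Matrix (Fin b) (Fin c) ℝ) :
    (X * Y).map Complex.ofReal = X.map Complex.ofReal * Y.map Complex.ofReal := by
  ext i j
  simp [Matrix.mul_apply, Matrix.map_apply]

lemma cadd {a b : ℕ} (X Y : Matrix (Fin a) (Fin b) ℝ) :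
    (X + Y).map Complex.ofReal = X.map Complex.ofReal + Y.map Complex.ofReal := by
  ext i j
  simp [Matrix.map_apply]

lemma csub {a b : ℕ} (X Y : Matrix (Fin a) (Fin b) ℝ) :
    (X - Y).map Complex.ofReal = X.map Complex.ofReal - Y.map Complex.ofReal := by
  ext i j
  simp [Matrix.map_apply]

lemma csmul {a b : ℕ} (r : ℝ) (X : Matrix (Fin a) (Fin b) ℝ) :
    (r • X).map Complex.ofReal = (r : ℂ) • X.map Complex.ofReal := by
  ext i j
  simp [Matrix.map_apply]

lemma ctrans {a b : ℕ} (X : Matrix (Fin a) (Fin b) ℝ) :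
    (Xᵀ).map Complex.ofReal = (X.map Complex.ofReal)ᴴ := by
  ext i j
  simp [Matrix.map_apply, Matrix.conjTranspose_apply, Complex.conj_ofReal]

/-- real PSD matrices complexify to PSD matrices -/
lemma cpsd {X : Matrix (Fin k) (Fin k) ℝ} (hX : X.PosSemidef) :
    (X.map Complex.ofReal).PosSemidef := by
  obtain ⟨B, rfl⟩ := (by open scoped MatrixOrder in exact CStarAlgebra.nonneg_iff_eq_star_mul_self.mp hX.nonneg : ∃ B : Matrix (Fin k) (Fin k) ℝ, X = star B * B)
  rw [Matrix.star_eq_conjTranspose]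
  have h : (Bᴴ * B).map Complex.ofReal
      = (B.map Complex.ofReal)ᴴ * (B.map Complex.ofReal) := by
    ext i j
    simp [Matrix.mul_apply, Matrix.map_apply, Matrix.conjTranspose_apply, Complex.conj_ofReal]
  rw [h]
  exact Matrix.posSemidef_conjTranspose_mul_self _

/-- nonnegative real scalar multiples of complex PSD matrices are PSD -/
lemma psd_smul {X : Matrix (Fin k) (Fin k) ℂ} (hX : X.PosSemidef) {r : ℝ} (hr : 0 ≤ r) :
    (((r : ℂ)) • X).PosSemidef := by
  refine Matrix.PosSemidef.of_dotProduct_mulVec_nonneg ?_ ?_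
  · have h : ((r:ℂ) • X)ᴴ = star (r:ℂ) • Xᴴ := Matrix.conjTranspose_smul _ _
    rw [Matrix.IsHermitian, h, Complex.star_def, Complex.conj_ofReal, hX.1]
  · intro x
    rw [Matrix.smul_mulVec, dotProduct_smul, smul_eq_mul]
    exact mul_nonneg (Complex.zero_le_real.mpr hr) (hX.dotProduct_mulVec_nonneg x)

/-- quadratic-form lower bound for real positive definite matrices -/
lemma pd_lower {Q : Matrix (Fin k) (Fin k) ℝ} (hQ : Q.PosDef) :
    ∃ δ : ℝ, 0 < δ ∧ ∀ x : Fin k → ℝ, δ * (∑ i, x i ^ 2) ≤ x ⬝ᵥ Q *ᵥ x := by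
  rcases Nat.eq_zero_or_pos k with hk | hk
  · subst hk
    exact ⟨1, one_pos, fun x => by simp [dotProduct]⟩
  haveI : Nonempty (Fin k) := ⟨⟨0, hk⟩⟩
  set E := EuclideanSpace ℝ (Fin k)
  have hcont : Continuous (fun x : E => (x : Fin k → ℝ) ⬝ᵥ Q *ᵥ (x : Fin k → ℝ)) := by
    simp only [dotProduct, Matrix.mulVec]
    apply continuous_finset_sum
    intro i _
    apply Continuous.mul
    · exact (EuclideanSpace.proj i).continuous
    · apply continuous_finset_sum
      intro j _
      exact continuous_const.mul (EuclideanSpace.proj j).continuous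
  have hsph : (Metric.sphere (0 : E) 1).Nonempty := by
    refine ⟨EuclideanSpace.single ⟨0, hk⟩ 1, ?_⟩
    rw [mem_sphere_zero_iff_norm, EuclideanSpace.norm_single, norm_one]
  obtain ⟨z, hz, hmin0⟩ := (isCompact_sphere (0 : E) 1).exists_isMinOn hsph hcont.continuousOn
  have hmin : ∀ y ∈ Metric.sphere (0:E) 1, (z : Fin k → ℝ) ⬝ᵥ Q *ᵥ (z : Fin k → ℝ) ≤ (y : Fin k → ℝ) ⬝ᵥ Q *ᵥ (y : Fin k → ℝ) := fun y hy => hmin0 hy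
  have hz1 : ‖z‖ = 1 := by simpa using (mem_sphere_zero_iff_norm).mp hz
  have hzne : (z : Fin k → ℝ) ≠ 0 := by
    intro h0
    have : z = 0 := by
      ext i; exact congrFun h0 i
    rw [this] at hz1; simp at hz1
  set δ := (z : Fin k → ℝ) ⬝ᵥ Q *ᵥ (z : Fin k → ℝ) with hδdef
  have hδpos : 0 < δ := by
    have := hQ.dotProduct_mulVec_pos hzne
    simpa using this
  refine ⟨δ, hδpos, fun x => ?_⟩
  by_cases hx : x = 0
  · simp [hx, dotProduct]
  · set X : E := (WithLp.equiv 2 (Fin k → ℝ)).symm x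
    have hXx : (X : Fin k → ℝ) = x := rfl
    have hXne : X ≠ 0 := by
      intro h0; apply hx
      ext i
      have := congrFun (congrArg (WithLp.equiv 2 (Fin k → ℝ)) h0) i
      simpa [hXx] using this
    set r := ‖X‖ with hr
    have hrpos : 0 < r := norm_pos_iff.mpr hXne
    set u : E := r⁻¹ • X with hu
    have hus : u ∈ Metric.sphere (0 : E) 1 := by
      simp only [hu, mem_sphere_zero_iff_norm, norm_smul, norm_inv, Real.norm_eq_abs]
      rw [abs_of_pos hrpos]
      exact inv_mul_cancel₀ (ne_of_gt hrpos)
    have hmin' := hmin u hus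
    have huco : ∀ i, (u : Fin k → ℝ) i = r⁻¹ * x i := by
      intro i; rfl
    have hform : (u : Fin k → ℝ) ⬝ᵥ Q *ᵥ (u : Fin k → ℝ)
        = r⁻¹ * r⁻¹ * (x ⬝ᵥ Q *ᵥ x) := by
      simp only [dotProduct, Matrix.mulVec, huco, Finset.mul_sum]
      apply Finset.sum_congr rfl
      intro i _
      apply Finset.sum_congr rfl
      intro j _
      ring
    have hnormsq : r ^ 2 = ∑ i, x i ^ 2 := by
      rw [hr, EuclideanSpace.norm_eq]
      rw [Real.sq_sqrt (by positivity)]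
      apply Finset.sum_congr rfl
      intro i _
      rw [hXx, Real.norm_eq_abs, _root_.sq_abs]
    have h1 : δ ≤ r⁻¹ * r⁻¹ * (x ⬝ᵥ Q *ᵥ x) := by rw [← hform]; exact hmin' 
    calc δ * (∑ i, x i ^ 2) = δ * r ^ 2 := by rw [hnormsq]
    _ ≤ (r⁻¹ * r⁻¹ * (x ⬝ᵥ Q *ᵥ x)) * r ^ 2 := by
        apply mul_le_mul_of_nonneg_right h1 (by positivity)
    _ = (x ⬝ᵥ Q *ᵥ x) * (r⁻¹ * r * (r⁻¹ * r)) := by ring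
    _ = x ⬝ᵥ Q *ᵥ x := by rw [inv_mul_cancel₀ (ne_of_gt hrpos)]; ring


/-- a small multiple of any symmetric matrix lies below a positive definite matrix -/
lemma exists_eps {Q R : Matrix (Fin k) (Fin k) ℝ} (hQ : Q.PosDef) (hR : R.IsHermitian) :
    ∃ ε : ℝ, 0 < ε ∧ ε ≤ 1 / 2 ∧ (Q - ε • R).PosSemidef := by
  have hlow' := pd_lower hQ
  obtain ⟨δ, hδ, hlow⟩ := hlow'
  set K := ∑ i, ∑ j, |R i j| with hK
  have hK0 : 0 ≤ K := Finset.sum_nonneg fun i _ => Finset.sum_nonneg fun j _ => abs_nonneg _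
  set ε := min (δ / (K + 1)) (1/2) with hε
  have hεpos : 0 < ε := lt_min (by positivity) (by norm_num)
  refine ⟨ε, hεpos, min_le_right _ _, Matrix.PosSemidef.of_dotProduct_mulVec_nonneg ?_ ?_⟩
  · have h : (Q - ε • R)ᴴ = Qᴴ - ε • Rᴴ := by
      ext i j; simp [Matrix.conjTranspose_apply, Matrix.sub_apply, Matrix.smul_apply]
    rw [Matrix.IsHermitian, h, hQ.1, hR]
  · intro x
    set S := ∑ l, x l ^ 2 with hS
    have hS0 : 0 ≤ S := Finset.sum_nonneg fun l _ => sq_nonneg _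
    have hxb : ∀ i j, |x i * x j| ≤ S := by
      intro i j
      have hi : x i ^ 2 ≤ S := Finset.single_le_sum (f := fun l => x l ^ 2)
        (fun l _ => sq_nonneg _) (Finset.mem_univ i)
      have hj : x j ^ 2 ≤ S := Finset.single_le_sum (f := fun l => x l ^ 2)
        (fun l _ => sq_nonneg _) (Finset.mem_univ j)
      rw [abs_mul]
      nlinarith [abs_nonneg (x i), abs_nonneg (x j), _root_.sq_abs (x i), _root_.sq_abs (x j),
        sq_nonneg (|x i| - |x j|)]
    have hRx : x ⬝ᵥ R *ᵥ x ≤ K * S := by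
      have h1 : x ⬝ᵥ R *ᵥ x ≤ |x ⬝ᵥ R *ᵥ x| := le_abs_self _
      have h2 : |x ⬝ᵥ R *ᵥ x| ≤ ∑ i, ∑ j, |R i j| * S := by
        simp only [dotProduct, Matrix.mulVec]
        refine le_trans (Finset.abs_sum_le_sum_abs _ _) ?_
        refine Finset.sum_le_sum fun i _ => ?_
        rw [Finset.mul_sum]
        refine le_trans (Finset.abs_sum_le_sum_abs _ _) ?_
        refine Finset.sum_le_sum fun j _ => ?_
        have : |x i * (R i j * x j)| = |R i j| * |x i * x j| := by
          rw [abs_mul, abs_mul, abs_mul]; ring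
        rw [this]
        exact mul_le_mul_of_nonneg_left (hxb i j) (abs_nonneg _)
      calc x ⬝ᵥ R *ᵥ x ≤ ∑ i, ∑ j, |R i j| * S := le_trans h1 h2
        _ = K * S := by rw [hK, Finset.sum_mul]; exact Finset.sum_congr rfl fun i _ => by rw [Finset.sum_mul]
    have hεK : ε * (K + 1) ≤ δ := by
      have : ε ≤ δ / (K + 1) := min_le_left _ _
      rwa [le_div_iff₀ (by positivity)] at this
    have hQx : δ * S ≤ x ⬝ᵥ Q *ᵥ x := hlow x
    have hstar : star x = x := star_trivial x
    rw [Matrix.sub_mulVec, dotProduct_sub, Matrix.smul_mulVec,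
      dotProduct_smul, hstar, smul_eq_mul]
    have h3 : ε * (x ⬝ᵥ R *ᵥ x) ≤ ε * (K * S) := mul_le_mul_of_nonneg_left hRx hεpos.le
    nlinarith [mul_le_mul_of_nonneg_right hεK hS0, mul_pos hεpos (lt_of_lt_of_le hδ (le_refl δ))]


lemma form_single (V : Matrix (Fin k) (Fin k) ℂ) (a : Fin k) :
    star (Pi.single a (1:ℂ)) ⬝ᵥ V *ᵥ Pi.single a (1:ℂ) = V a a := by
  simp [dotProduct, Matrix.mulVec, Pi.single_apply, Finset.sum_ite_eq]

lemma form_pair (V : Matrix (Fin k) (Fin k) ℂ) (a b : Fin k) (c : ℂ) :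
    star (Pi.single a (1:ℂ) + Pi.single b c) ⬝ᵥ V *ᵥ (Pi.single a (1:ℂ) + Pi.single b c)
      = V a a + V a b * c + (starRingEnd ℂ) c * V b a + (starRingEnd ℂ) c * c * V b b := by
  have hXu : V *ᵥ (Pi.single a (1:ℂ) + Pi.single b c) = fun r => V r a + V r b * c := by
    ext r
    rw [Matrix.mulVec_add]
    simp [Matrix.mulVec_single, mul_comm]
  have hsu : star (Pi.single a (1:ℂ) + Pi.single b c)
      = (Pi.single a (1:ℂ) + Pi.single b ((starRingEnd ℂ) c) : Fin k → ℂ) := by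
    funext r
    by_cases hra : r = a <;> by_cases hrb : r = b <;>
      simp [Pi.star_apply, Pi.single_apply, hra, hrb, Complex.star_def,
        apply_ite (starRingEnd ℂ)]
  rw [hXu, hsu, add_dotProduct, single_dotProduct, single_dotProduct]
  show 1 * (V a a + V a b * c) + (starRingEnd ℂ) c * (V b a + V b b * c) = _
  ring

lemma psd_diag {X : Matrix (Fin k) (Fin k) ℂ} (hX : X.PosSemidef) (i : Fin k) :
    0 ≤ (X i i).re := by
  have h := hX.re_dotProduct_nonneg (Pi.single i 1)
  simpa [dotProduct, Matrix.mulVec, Pi.single_apply, Finset.sum_ite_eq,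
    dotProduct_single, Matrix.mulVec_single] using h

lemma psd_entry {X : Matrix (Fin k) (Fin k) ℂ} (hX : X.PosSemidef) (i j : Fin k) :
    ‖X i j‖ ≤ (X i i).re + (X j j).re := by
  have psd_diag := psd_diag hX
  by_cases hij : i = j
  · subst hij
    have h0 : (0:ℂ) ≤ X i i := by
      have h := hX.dotProduct_mulVec_nonneg (Pi.single i 1)
      simpa [dotProduct, Matrix.mulVec, Pi.single_apply, Finset.sum_ite_eq] using h
    rw [Complex.le_def] at h0
    obtain ⟨hre, him⟩ := h0
    simp only [Complex.zero_re, Complex.zero_im] at hre him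
    have hn : ‖X i i‖ = (X i i).re := by
      rw [Complex.norm_def, Complex.normSq_apply, ← him, mul_zero,
        add_zero, ← sq, Real.sqrt_sq hre]
    rw [hn]
    linarith
  · by_cases hz : X i j = 0
    · rw [hz]; simpa using add_nonneg (psd_diag i) (psd_diag j)
    · set z := X i j with hzdef
      have hnz : ‖z‖ ≠ 0 := by simpa using hz
      have hcast : ((‖z‖:ℝ):ℂ) ≠ 0 := Complex.ofReal_ne_zero.mpr hnz
      set c : ℂ := -(starRingEnd ℂ) z / (‖z‖ : ℂ) with hc
      set u : Fin k → ℂ := Pi.single i 1 + Pi.single j c with hu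
      have hzz : z * (starRingEnd ℂ) z = ((‖z‖:ℝ):ℂ) * ((‖z‖:ℝ):ℂ) := by
        rw [Complex.mul_conj]
        norm_cast
        rw [Complex.normSq_eq_norm_sq, sq]
      have hzc : z * c = -((‖z‖:ℝ):ℂ) := by
        calc z * c = -(z * (starRingEnd ℂ) z) / ((‖z‖:ℝ):ℂ) := by rw [hc]; ring
        _ = -((((‖z‖:ℝ):ℂ) * ((‖z‖:ℝ):ℂ)) / ((‖z‖:ℝ):ℂ)) := by rw [hzz, neg_div]
        _ = -((‖z‖:ℝ):ℂ) := by rw [mul_div_cancel_right₀ _ hcast]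
      have hconjc : (starRingEnd ℂ) c = -z / ((‖z‖:ℝ):ℂ) := by
        rw [hc, map_div₀, map_neg, Complex.conj_conj, Complex.conj_ofReal]
      have hcc : (starRingEnd ℂ) c * c = 1 := by
        rw [hconjc, hc, div_mul_div_comm, neg_mul_neg, hzz]
        exact div_self (mul_ne_zero hcast hcast)
      have hji : X j i = (starRingEnd ℂ) z := by
        have h := congrFun (congrFun hX.1 j) i
        simpa [Matrix.conjTranspose_apply, Complex.star_def] using h.symm
      have hcz : (starRingEnd ℂ) c * X j i = -((‖z‖:ℝ):ℂ) := by
        calc (starRingEnd ℂ) c * X j i = -(z * (starRingEnd ℂ) z) / ((‖z‖:ℝ):ℂ) := by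
              rw [hji, hconjc]; ring
        _ = -((((‖z‖:ℝ):ℂ) * ((‖z‖:ℝ):ℂ)) / ((‖z‖:ℝ):ℂ)) := by rw [hzz, neg_div]
        _ = -((‖z‖:ℝ):ℂ) := by rw [mul_div_cancel_right₀ _ hcast]
      have hXu : X *ᵥ u = fun r => X r i + X r j * c := by
        ext r
        rw [hu, Matrix.mulVec_add]
        simp [Matrix.mulVec_single, mul_comm]
      have hsu : star u = Pi.single i 1 + Pi.single j ((starRingEnd ℂ) c) := by
        funext r
        by_cases hri : r = i <;> by_cases hrj : r = j <;>
          simp [hu, Pi.star_apply, Pi.single_apply, hri, hrj, Complex.star_def, hij]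
      have hform : star u ⬝ᵥ X *ᵥ u
          = X i i + z * c + (starRingEnd ℂ) c * X j i + (starRingEnd ℂ) c * c * X j j := by
        rw [hXu, hsu, add_dotProduct, single_dotProduct, single_dotProduct]
        show 1 * (X i i + X i j * c) + (starRingEnd ℂ) c * (X j i + X j j * c) = _
        rw [← hzdef]; ring
      have hpos := hX.dotProduct_mulVec_nonneg u
      rw [hform, hzc, hcz, hcc] at hpos
      have hre := (Complex.le_def.mp hpos).1
      simp only [one_mul, Complex.add_re, Complex.neg_re, Complex.ofReal_re,
        Complex.zero_re] at hre
      have h0 : 0 ≤ ‖z‖ := norm_nonneg _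
      linarith


/-- rank-one matrices are PSD -/
lemma rank_one_psd (u : Fin k → ℂ) :
    (Matrix.of fun i j => u i * star (u j)).PosSemidef := by
  refine Matrix.PosSemidef.of_dotProduct_mulVec_nonneg ?_ ?_
  · ext i j
    simp [Matrix.conjTranspose_apply, mul_comm]
  · intro x
    have h : (Matrix.of fun i j => u i * star (u j)) *ᵥ x = (star u ⬝ᵥ x) • u := by
      ext i
      simp only [Matrix.mulVec, dotProduct, Matrix.of_apply, Pi.smul_apply, smul_eq_mul,
        Finset.sum_mul, Finset.mul_sum]
      apply Finset.sum_congr rfl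
      intros; simp [Pi.star_apply]; ring
    rw [h, dotProduct_smul, smul_eq_mul]
    have h2 : star x ⬝ᵥ u = star (star u ⬝ᵥ x) := by
      simp [dotProduct, star_sum, mul_comm]
    rw [h2]
    exact mul_star_self_nonneg (star u ⬝ᵥ x)

/-- rank-one matrices are bounded by the norm times the identity -/
lemma rank_one_le (u : Fin k → ℂ) :
    ((((∑ i, ‖u i‖ ^ 2 : ℝ)) : ℂ) • (1 : Matrix (Fin k) (Fin k) ℂ) -
      Matrix.of fun i j => u i * star (u j)).PosSemidef := by
  set s : ℝ := ∑ i, ‖u i‖ ^ 2 with hs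
  refine Matrix.PosSemidef.of_dotProduct_mulVec_nonneg ?_ ?_
  · have h1 : ((s:ℂ) • (1 : Matrix (Fin k) (Fin k) ℂ))ᴴ = (s:ℂ) • 1 := by
      rw [Matrix.conjTranspose_smul, Matrix.conjTranspose_one, Complex.star_def,
        Complex.conj_ofReal]
    have h2 : (Matrix.of fun i j => u i * star (u j)).IsHermitian := by
      ext i j; simp [Matrix.conjTranspose_apply, mul_comm]
    rw [Matrix.IsHermitian, Matrix.conjTranspose_sub, h1, h2]
  · intro x
    have hYx : star x ⬝ᵥ ((Matrix.of fun i j => u i * star (u j)) *ᵥ x)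
        = star (star u ⬝ᵥ x) * (star u ⬝ᵥ x) := by
      have h : (Matrix.of fun i j => u i * star (u j)) *ᵥ x = (star u ⬝ᵥ x) • u := by
        ext i
        simp only [Matrix.mulVec, dotProduct, Matrix.of_apply, Pi.smul_apply, smul_eq_mul,
          Finset.sum_mul, Finset.mul_sum]
        apply Finset.sum_congr rfl
        intros; simp [Pi.star_apply]; ring
      rw [h, dotProduct_smul, smul_eq_mul]
      have h2 : star x ⬝ᵥ u = star (star u ⬝ᵥ x) := by
        simp [dotProduct, star_sum, mul_comm]
      rw [h2, mul_comm]
    have hxx : star x ⬝ᵥ x = ((∑ i, ‖x i‖ ^ 2 : ℝ) : ℂ) := by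
      push_cast
      apply Finset.sum_congr rfl
      intro i _
      rw [Pi.star_apply, Complex.star_def, mul_comm, Complex.mul_conj, Complex.normSq_eq_norm_sq]
      norm_cast
    have hz2 : star (star u ⬝ᵥ x) * (star u ⬝ᵥ x) = ((‖star u ⬝ᵥ x‖ ^ 2 : ℝ) : ℂ) := by
      rw [Complex.star_def, mul_comm, Complex.mul_conj, Complex.normSq_eq_norm_sq]
    rw [Matrix.sub_mulVec, dotProduct_sub, Matrix.smul_mulVec, Matrix.one_mulVec,
      dotProduct_smul, smul_eq_mul, hYx, hxx, hz2]
    have hcs : ‖star u ⬝ᵥ x‖ ^ 2 ≤ s * ∑ i, ‖x i‖ ^ 2 := by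
      set uE : EuclideanSpace ℂ (Fin k) := (WithLp.equiv 2 (Fin k → ℂ)).symm u
      set xE : EuclideanSpace ℂ (Fin k) := (WithLp.equiv 2 (Fin k → ℂ)).symm x
      have hi : inner ℂ uE xE = star u ⬝ᵥ x := by
        rw [PiLp.inner_apply]
        apply Finset.sum_congr rfl
        intro i _
        show inner ℂ (u i) (x i) = star (u i) * x i
        simp [RCLike.inner_apply, mul_comm]
      have hnu : ‖uE‖ ^ 2 = s := by
        rw [EuclideanSpace.norm_eq, Real.sq_sqrt (by positivity)]
        exact Finset.sum_congr rfl fun i _ => rfl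
      have hnx : ‖xE‖ ^ 2 = ∑ i, ‖x i‖ ^ 2 := by
        rw [EuclideanSpace.norm_eq, Real.sq_sqrt (by positivity)]
        exact Finset.sum_congr rfl fun i _ => rfl
      have := norm_inner_le_norm (𝕜 := ℂ) uE xE
      have hsq : ‖(inner ℂ uE xE : ℂ)‖ ^ 2 ≤ (‖uE‖ * ‖xE‖) ^ 2 := by
        apply pow_le_pow_left₀ (norm_nonneg _) this
      rw [hi] at hsq
      rw [mul_pow, hnu, hnx] at hsq
      exact hsq
    have heq : (s : ℂ) * ((∑ i, ‖x i‖ ^ 2 : ℝ) : ℂ) - ((‖star u ⬝ᵥ x‖ ^ 2 : ℝ) : ℂ)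
        = (((s * ∑ i, ‖x i‖ ^ 2 - ‖star u ⬝ᵥ x‖ ^ 2 : ℝ)) : ℂ) := by
      push_cast; ring
    rw [heq, Complex.zero_le_real]
    linarith

/-- a nonzero complex matrix has a nonzero quadratic form value -/
lemma exists_form_ne_zero {V : Matrix (Fin k) (Fin k) ℂ} (hV : V ≠ 0) :
    ∃ u : Fin k → ℂ, star u ⬝ᵥ V *ᵥ u ≠ 0 := by
  have hab : ∃ a b, V a b ≠ 0 := by
    by_contra h
    push_neg at h
    exact hV (by ext a b; simpa using h a b)
  obtain ⟨a, b, hne⟩ := hab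
  by_contra hall
  push_neg at hall
  have ha : V a a = 0 := by rw [← form_single V a]; exact hall _
  have hb : V b b = 0 := by rw [← form_single V b]; exact hall _
  have h1 : V a a + V a b * 1 + (starRingEnd ℂ) 1 * V b a + (starRingEnd ℂ) 1 * 1 * V b b = 0 := by
    rw [← form_pair V a b 1]; exact hall _
  have h2 : V a a + V a b * Complex.I + (starRingEnd ℂ) Complex.I * V b a
      + (starRingEnd ℂ) Complex.I * Complex.I * V b b = 0 := by
    rw [← form_pair V a b Complex.I]; exact hall _
  rw [ha, hb] at h1
  simp only [_root_.map_one, one_mul, mul_one, zero_add, add_zero] at h1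
  rw [ha, hb, Complex.conj_I] at h2
  apply hne
  have e1 : V a b + V b a = 0 := by linear_combination h1
  have e2 : Complex.I * V a b - Complex.I * V b a = 0 := by linear_combination h2
  have e2' : V a b - V b a = 0 := by
    have h3 : Complex.I * (V a b - V b a) = 0 := by linear_combination e2
    rcases mul_eq_zero.mp h3 with h | h
    · exact absurd h Complex.I_ne_zero
    · exact h
  linear_combination (e1 + e2') / 2

end StabAux

open scoped ComplexOrder

theorem stmt10 {n m : ℕ} (A C : Matrix (Fin n) (Fin n) ℝ)
    (B D : Matrix (Fin n) (Fin m) ℝ) (L : Matrix (Fin m) (Fin n) ℝ) (γ : ℝ)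
    (hγ : 0 ≤ γ) (P U : Matrix (Fin n) (Fin n) ℝ)
    (hP : P.PosDef) (hU : U.PosDef)
    (hlyap : P = γ • ((A + B * L)ᵀ * P * (A + B * L)) +
      γ • ((C + D * L)ᵀ * P * (C + D * L)) + U) :
    γ * specRad ((A + B * L) ⊗ₖ (A + B * L) + (C + D * L) ⊗ₖ (C + D * L)) < 1 := by
  classical
  obtain ⟨ε, hε0, hε12, hUP⟩ := StabAux.exists_eps hU hP.1
  set θ : ℝ := 1 - ε with hθdef
  have hθ0 : 0 < θ := by rw [hθdef]; linarith
  have hθ1 : θ < 1 := by rw [hθdef]; linarith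
  set F := A + B * L with hFdef
  set G := C + D * L with hGdef
  have key : ∀ μ ∈ spectrum ℂ ((F ⊗ₖ F + G ⊗ₖ G).map Complex.ofReal), γ * ‖μ‖ ≤ θ := by
    intro μ hμ
    set Fc := F.map Complex.ofReal with hFc
    set Gc := G.map Complex.ofReal with hGc
    set Pc := P.map Complex.ofReal with hPc
    set Uc := U.map Complex.ofReal with hUc
    set Mc := ((F ⊗ₖ F + G ⊗ₖ G).map Complex.ofReal) with hMc
    -- eigenvector
    have hμ' : Module.End.HasEigenvalue (Matrix.toLinAlgEquiv' Mc) μ := by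
      rw [Module.End.hasEigenvalue_iff_mem_spectrum, AlgEquiv.spectrum_eq]
      exact hμ
    obtain ⟨v, hv⟩ := hμ'.exists_hasEigenvector
    have hvne : v ≠ 0 := hv.2
    have hMv : Mc *ᵥ v = μ • v := by
      have h := hv.apply_eq_smul
      rwa [Matrix.toLinAlgEquiv'_apply] at h
    set V : Matrix (Fin n) (Fin n) ℂ := Matrix.of (fun i j => v (i, j)) with hVdef
    have hVne : V ≠ 0 := by
      intro h0
      apply hvne
      funext p
      have := congrFun (congrFun h0 p.1) p.2
      simpa [hVdef] using this
    have hV : Fc * V * Fcᴴ + Gc * V * Gcᴴ = μ • V := by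
      ext i k
      have h1 := congrFun hMv (i, k)
      simp only [hMc, Matrix.mulVec, dotProduct, Fintype.sum_prod_type, Matrix.map_apply,
        Matrix.add_apply, Matrix.kroneckerMap_apply, Pi.smul_apply, smul_eq_mul] at h1
      have expand : ∀ (W : Matrix (Fin n) (Fin n) ℝ),
          (∑ l, (∑ j, ((W i j : ℂ)) * V j l) * ((W k l : ℂ)))
            = ∑ j, ∑ l, (((W i j : ℂ)) * ((W k l : ℂ))) * v (j, l) := by
        intro W
        simp only [Finset.sum_mul]
        rw [Finset.sum_comm]
        apply Finset.sum_congr rfl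
        intro j _
        apply Finset.sum_congr rfl
        intro l _
        show (W i j : ℂ) * v (j, l) * (W k l : ℂ) = _
        ring
      have hlhs : (Fc * V * Fcᴴ + Gc * V * Gcᴴ) i k
          = (∑ l, (∑ j, ((F i j : ℂ)) * V j l) * ((F k l : ℂ)))
            + (∑ l, (∑ j, ((G i j : ℂ)) * V j l) * ((G k l : ℂ))) := by
        simp only [Matrix.add_apply, Matrix.mul_apply, Matrix.conjTranspose_apply,
          Matrix.map_apply, RCLike.star_def, Complex.conj_ofReal, hFc, hGc]
      rw [hlhs, expand F, expand G, ← Finset.sum_add_distrib]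
      show _ = (μ • V) i k
      rw [Matrix.smul_apply, smul_eq_mul]
      have hVik : V i k = v (i, k) := rfl
      rw [hVik, ← h1]
      apply Finset.sum_congr rfl
      intro j _
      rw [← Finset.sum_add_distrib]
      apply Finset.sum_congr rfl
      intro l _
      show (F i j : ℂ) * (F k l : ℂ) * v (j, l) + (G i j : ℂ) * (G k l : ℂ) * v (j, l) = _
      push_cast
      ring
    -- test vector and rank-one comparison matrix
    obtain ⟨u, hu⟩ := StabAux.exists_form_ne_zero hVne
    set Y : Matrix (Fin n) (Fin n) ℂ := Matrix.of (fun i j => u i * star (u j)) with hYdef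
    have hYpsd : Y.PosSemidef := StabAux.rank_one_psd u
    obtain ⟨ε₂, hε₂0, _, hP1⟩ := StabAux.exists_eps hP (Matrix.isHermitian_one)
    set s : ℝ := ∑ i, ‖u i‖ ^ 2 with hsdef
    have hs0 : 0 ≤ s := Finset.sum_nonneg fun i _ => sq_nonneg _
    set c₀ : ℝ := s / ε₂ with hc₀def
    have hc₀0 : 0 ≤ c₀ := div_nonneg hs0 hε₂0.le
    have hmap1 : (P - ε₂ • (1 : Matrix (Fin n) (Fin n) ℝ)).map Complex.ofReal
        = Pc - (ε₂ : ℂ) • (1 : Matrix (Fin n) (Fin n) ℂ) := by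
      rw [StabAux.csub, StabAux.csmul]
      rw [Matrix.map_one _ Complex.ofReal_zero Complex.ofReal_one]
    have hYle : ((c₀ : ℂ) • Pc - Y).PosSemidef := by
      have h1 : ((P - ε₂ • 1).map Complex.ofReal).PosSemidef := StabAux.cpsd hP1
      rw [hmap1] at h1
      have h2 := StabAux.psd_smul h1 hc₀0
      have h3 := StabAux.rank_one_le u
      have hsc : (c₀ : ℂ) * (ε₂ : ℂ) = (s : ℂ) := by
        rw [hc₀def]
        push_cast
        field_simp
      have heq : (c₀ : ℂ) • Pc - Y
          = (c₀ : ℂ) • (Pc - (ε₂ : ℂ) • (1 : Matrix (Fin n) (Fin n) ℂ))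
            + ((s : ℂ) • (1 : Matrix (Fin n) (Fin n) ℂ) - Y) := by
        rw [smul_sub, smul_smul, hsc]
        abel
      rw [heq]
      exact h2.add h3
    -- complexified Lyapunov equation
    have hlyapc : Pc = (γ : ℂ) • (Fcᴴ * Pc * Fc) + (γ : ℂ) • (Gcᴴ * Pc * Gc) + Uc := by
      have h0 := congrArg (fun M => M.map Complex.ofReal) hlyap
      simp only [StabAux.cadd, StabAux.csmul, StabAux.cmul, StabAux.ctrans] at h0
      exact h0
    set Φ : Matrix (Fin n) (Fin n) ℂ → Matrix (Fin n) (Fin n) ℂ :=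
      fun X => (γ : ℂ) • (Fcᴴ * X * Fc) + (γ : ℂ) • (Gcᴴ * X * Gc) with hΦdef
    have hΦP : Φ Pc = Pc - Uc := by
      rw [hΦdef]
      have := hlyapc.symm
      rw [eq_sub_iff_add_eq]
      exact this
    have hUcPSD : (Uc - (ε : ℂ) • Pc).PosSemidef := by
      have h1 := StabAux.cpsd hUP
      rwa [StabAux.csub, StabAux.csmul] at h1
    have hstep : ∀ (c : ℝ), 0 ≤ c → ∀ X : Matrix (Fin n) (Fin n) ℂ, X.PosSemidef →
        ((c : ℂ) • Pc - X).PosSemidef →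
        (Φ X).PosSemidef ∧ (((c * θ : ℝ) : ℂ) • Pc - Φ X).PosSemidef := by
      intro c hc X hX hXle
      have hphi : (Φ X).PosSemidef :=
        (StabAux.psd_smul (hX.conjTranspose_mul_mul_same Fc) hγ).add
          (StabAux.psd_smul (hX.conjTranspose_mul_mul_same Gc) hγ)
      refine ⟨hphi, ?_⟩
      have hphi2 : (Φ ((c : ℂ) • Pc - X)).PosSemidef :=
        (StabAux.psd_smul (hXle.conjTranspose_mul_mul_same Fc) hγ).add
          (StabAux.psd_smul (hXle.conjTranspose_mul_mul_same Gc) hγ)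
      have hsm : ((c : ℂ) • (Uc - (ε : ℂ) • Pc)).PosSemidef := StabAux.psd_smul hUcPSD hc
      have hlin : Φ ((c : ℂ) • Pc - X) = (c : ℂ) • (Φ Pc) - Φ X := by
        rw [hΦdef]
        simp only [Matrix.mul_sub, Matrix.sub_mul, Matrix.mul_smul, Matrix.smul_mul, smul_sub,
          smul_add]
        module
      have heq : ((c * θ : ℝ) : ℂ) • Pc - Φ X
          = (c : ℂ) • (Uc - (ε : ℂ) • Pc) + Φ ((c : ℂ) • Pc - X) := by
        rw [hlin, hΦP]
        have hcast : ((c * θ : ℝ) : ℂ) = (c : ℂ) * (1 - (ε : ℂ)) := by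
          rw [hθdef]; push_cast; ring
        rw [hcast]
        module
      rw [heq]
      exact hsm.add hphi2
    have main : ∀ N : ℕ, ((Φ^[N]) Y).PosSemidef ∧
        (((c₀ * θ ^ N : ℝ) : ℂ) • Pc - (Φ^[N]) Y).PosSemidef := by
      intro N
      induction N with
      | zero =>
        refine ⟨hYpsd, ?_⟩
        have : ((c₀ * θ ^ 0 : ℝ) : ℂ) = (c₀ : ℂ) := by norm_num
        rw [this]
        exact hYle
      | succ N ih =>
        have h := hstep (c₀ * θ ^ N) (mul_nonneg hc₀0 (pow_nonneg hθ0.le N)) _ ih.1 ih.2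
        have hc' : c₀ * θ ^ (N + 1) = (c₀ * θ ^ N) * θ := by ring
        rw [Function.iterate_succ_apply', hc']
        exact h
    -- trace identity
    have htr : ∀ N : ℕ, Matrix.trace ((Φ^[N]) Y * V)
        = ((γ : ℂ) * μ) ^ N * Matrix.trace (Y * V) := by
      intro N
      induction N with
      | zero => simp
      | succ N ih =>
        rw [Function.iterate_succ_apply']
        have hstep1 : ∀ X : Matrix (Fin n) (Fin n) ℂ,
            Matrix.trace (Φ X * V) = ((γ : ℂ) * μ) * Matrix.trace (X * V) := by
          intro X
          have hcF : Matrix.trace (Fcᴴ * X * Fc * V) = Matrix.trace (X * (Fc * V * Fcᴴ)) := by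
            calc Matrix.trace (Fcᴴ * X * Fc * V)
                = Matrix.trace ((Fcᴴ * X) * (Fc * V)) := by rw [Matrix.mul_assoc]
              _ = Matrix.trace ((Fc * V) * (Fcᴴ * X)) := Matrix.trace_mul_comm _ _
              _ = Matrix.trace (((Fc * V) * Fcᴴ) * X) := by rw [← Matrix.mul_assoc]
              _ = Matrix.trace (X * (Fc * V * Fcᴴ)) := Matrix.trace_mul_comm _ _
          have hcG : Matrix.trace (Gcᴴ * X * Gc * V) = Matrix.trace (X * (Gc * V * Gcᴴ)) := by
            calc Matrix.trace (Gcᴴ * X * Gc * V)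
                = Matrix.trace ((Gcᴴ * X) * (Gc * V)) := by rw [Matrix.mul_assoc]
              _ = Matrix.trace ((Gc * V) * (Gcᴴ * X)) := Matrix.trace_mul_comm _ _
              _ = Matrix.trace (((Gc * V) * Gcᴴ) * X) := by rw [← Matrix.mul_assoc]
              _ = Matrix.trace (X * (Gc * V * Gcᴴ)) := Matrix.trace_mul_comm _ _
          have hsum : Matrix.trace (X * (Fc * V * Fcᴴ)) + Matrix.trace (X * (Gc * V * Gcᴴ))
              = μ * Matrix.trace (X * V) := by
            rw [← Matrix.trace_add, ← Matrix.mul_add, hV, Matrix.mul_smul, Matrix.trace_smul,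
              smul_eq_mul]
          show Matrix.trace (((γ:ℂ) • (Fcᴴ * X * Fc) + (γ:ℂ) • (Gcᴴ * X * Gc)) * V) = _
          rw [Matrix.add_mul, Matrix.smul_mul, Matrix.smul_mul, Matrix.trace_add,
            Matrix.trace_smul, Matrix.trace_smul, hcF, hcG, smul_eq_mul, smul_eq_mul,
            ← mul_add, hsum]
          ring
        rw [hstep1, ih]
        ring
    -- entrywise bound and conclusion
    have hPdiag : ∀ i, 0 ≤ P i i := by
      intro i
      have h := StabAux.psd_diag (StabAux.cpsd hP.posSemidef) i
      simpa [Matrix.map_apply] using h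
    set Cv : ℝ := ∑ i, ∑ j, (P i i + P j j) * ‖V j i‖ with hCvdef
    have hbound : ∀ N : ℕ, ‖Matrix.trace ((Φ^[N]) Y * V)‖ ≤ (c₀ * θ ^ N) * Cv := by
      intro N
      obtain ⟨hpsd, hle⟩ := main N
      set X := (Φ^[N]) Y with hX
      set cN : ℝ := c₀ * θ ^ N with hcN
      have hdiag : ∀ i, (X i i).re ≤ cN * P i i := by
        intro i
        have h := StabAux.psd_diag hle i
        have hexp : ((((cN : ℝ) : ℂ) • Pc - X) i i).re = cN * P i i - (X i i).re := by
          have hval : (((cN : ℝ) : ℂ) • Pc - X) i i = (cN : ℂ) * ((P i i : ℝ) : ℂ) - X i i := by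
            simp [hPc, Matrix.sub_apply, Matrix.smul_apply, Matrix.map_apply, smul_eq_mul]
          rw [hval, Complex.sub_re, ← Complex.ofReal_mul, Complex.ofReal_re]
        rw [hexp] at h
        linarith
      have hentry : ∀ i j, ‖X i j‖ ≤ cN * (P i i + P j j) := by
        intro i j
        refine le_trans (StabAux.psd_entry hpsd i j) ?_
        rw [mul_add]
        exact add_le_add (hdiag i) (hdiag j)
      have hexp2 : Matrix.trace (X * V) = ∑ i, ∑ j, X i j * V j i := by
        simp [Matrix.trace, Matrix.diag, Matrix.mul_apply]
      rw [hexp2]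
      refine le_trans (norm_sum_le _ _) ?_
      have h1 : ∀ i : Fin n, ‖∑ j, X i j * V j i‖ ≤ ∑ j, cN * ((P i i + P j j) * ‖V j i‖) := by
        intro i
        refine le_trans (norm_sum_le _ _) ?_
        refine Finset.sum_le_sum fun j _ => ?_
        rw [norm_mul]
        calc ‖X i j‖ * ‖V j i‖ ≤ (cN * (P i i + P j j)) * ‖V j i‖ :=
              mul_le_mul_of_nonneg_right (hentry i j) (norm_nonneg _)
          _ = cN * ((P i i + P j j) * ‖V j i‖) := by ring
      refine le_trans (Finset.sum_le_sum fun i _ => h1 i) ?_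
      rw [hcN, hCvdef]
      rw [Finset.mul_sum]
      refine le_of_eq (Finset.sum_congr rfl fun i _ => ?_)
      rw [Finset.mul_sum]
    have htrY : Matrix.trace (Y * V) = star u ⬝ᵥ V *ᵥ u := by
      simp only [hYdef, Matrix.trace, Matrix.diag, Matrix.mul_apply, dotProduct,
        Matrix.mulVec, Matrix.of_apply, Pi.star_apply, Finset.mul_sum]
      rw [Finset.sum_comm]
      apply Finset.sum_congr rfl
      intro j _
      apply Finset.sum_congr rfl
      intro i _
      ring
    have hT0 : 0 < ‖Matrix.trace (Y * V)‖ := by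
      rw [htrY]
      exact norm_pos_iff.mpr hu
    have hfin : ∀ N : ℕ, (γ * ‖μ‖) ^ N * ‖Matrix.trace (Y * V)‖ ≤ (c₀ * Cv) * θ ^ N := by
      intro N
      have hb := hbound N
      rw [htr N] at hb
      have hnorm : ‖((γ : ℂ) * μ) ^ N * Matrix.trace (Y * V)‖
          = (γ * ‖μ‖) ^ N * ‖Matrix.trace (Y * V)‖ := by
        rw [norm_mul, norm_pow, norm_mul, Complex.norm_real, Real.norm_eq_abs, abs_of_nonneg hγ]
      rw [hnorm] at hb
      calc (γ * ‖μ‖) ^ N * ‖Matrix.trace (Y * V)‖ ≤ (c₀ * θ ^ N) * Cv := hb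
        _ = (c₀ * Cv) * θ ^ N := by ring
    by_contra hgt
    push_neg at hgt
    have hr1 : 1 < (γ * ‖μ‖) / θ := (one_lt_div hθ0).mpr hgt
    obtain ⟨N, hN⟩ := pow_unbounded_of_one_lt ((c₀ * Cv) / ‖Matrix.trace (Y * V)‖) hr1
    have h2 : ((γ * ‖μ‖) / θ) ^ N ≤ (c₀ * Cv) / ‖Matrix.trace (Y * V)‖ := by
      rw [div_pow, div_le_div_iff₀ (pow_pos hθ0 N) hT0]
      exact hfin N
    linarith
  rw [specRad]
  rcases eq_or_lt_of_le hγ with hγ0 | hγpos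
  · rw [← hγ0]; simpa using one_pos
  · have hb : sSup ((fun μ : ℂ => ‖μ‖) ''
        spectrum ℂ ((F ⊗ₖ F + G ⊗ₖ G).map Complex.ofReal)) ≤ θ / γ := by
      apply Real.sSup_le
      · rintro x ⟨μ, hμ, rfl⟩
        rw [le_div_iff₀ hγpos]
        have h := key μ hμ
        linarith [h]
      · positivity
    calc γ * sSup ((fun μ : ℂ => ‖μ‖) ''
          spectrum ℂ ((F ⊗ₖ F + G ⊗ₖ G).map Complex.ofReal)) ≤ γ * (θ / γ) :=
            mul_le_mul_of_nonneg_left hb hγ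
      _ = θ := by field_simp
      _ < 1 := hθ1
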